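/- arXiv:2411.10359 — 2 statements merged into one kernel-verified Lean document; each statement's English description precedes it below -/
import Mathlib

section
/- Let N, m ≥ 1, let P ∈ ℝ^{N×N} be symmetric positive definite, let X ∈ ℝ^{N×N} be symmetric, let K ∈ ℝ^{m×N}, and let τ, c_x, c_u > 0 be real numbers. Then the symmetric block matrix [[X + τ·P⁻², I_N, Kᵀ], [I_N, −(τ/(2c_x²))·I_N, 0], [K, 0, −(τ/(2c_u²))·I_m]] (of size 2N+m) is negative semidefinite if and only if the symmetric block matrix [[X + (2c_x²/τ)·I_N + (2c_u²/τ)·Kᵀ·K, P⁻¹], [P⁻¹, −(1/τ)·I_N]] (of size 2N) is negative semidefinite. -/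
open Matrix

/-- A real matrix is negative semidefinite if it is symmetric (Hermitian) and its
quadratic form is nonpositive. -/
def NegSemidef {k : Type*} [Fintype k] (M : Matrix k k ℝ) : Prop :=
  M.IsHermitian ∧ ∀ v : k → ℝ, v ⬝ᵥ M.mulVec v ≤ 0

/-- A symmetric 3×3 block matrix with block sizes `α`, `β`, `γ`. -/
def blk3 {α β γ : Type*} (A11 : Matrix α α ℝ) (A12 : Matrix α β ℝ) (A13 : Matrix α γ ℝ)
    (A21 : Matrix β α ℝ) (A22 : Matrix β β ℝ) (A23 : Matrix β γ ℝ)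
    (A31 : Matrix γ α ℝ) (A32 : Matrix γ β ℝ) (A33 : Matrix γ γ ℝ) :
    Matrix ((α ⊕ β) ⊕ γ) ((α ⊕ β) ⊕ γ) ℝ :=
  Matrix.fromBlocks (Matrix.fromBlocks A11 A12 A21 A22) (Matrix.fromRows A13 A23)
    (Matrix.fromCols A31 A32) A33

private lemma dsq {n : Type*} [Fintype n] (v : n → ℝ) : 0 ≤ v ⬝ᵥ v :=
  Finset.sum_nonneg fun i _ => mul_self_nonneg _

/-- AM-GM style bound: `2⟨u,v⟩ - a⟨v,v⟩ ≤ (1/a)⟨u,u⟩` for `a > 0`. -/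
private lemma cross_le {n : Type*} [Fintype n] (u v : n → ℝ) (a : ℝ) (ha : 0 < a) :
    2 * (u ⬝ᵥ v) - a * (v ⬝ᵥ v) ≤ (1 / a) * (u ⬝ᵥ u) := by
  have h := dsq (a • v - u)
  have hexp : (a • v - u) ⬝ᵥ (a • v - u)
      = a ^ 2 * (v ⬝ᵥ v) - 2 * a * (u ⬝ᵥ v) + u ⬝ᵥ u := by
    simp only [sub_dotProduct, dotProduct_sub, smul_dotProduct, dotProduct_smul, smul_eq_mul,
      dotProduct_comm v u]
    ring
  rw [hexp] at h
  rw [div_mul_eq_mul_div, le_div_iff₀ ha]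
  nlinarith

private lemma cross_eq {n : Type*} [Fintype n] (u : n → ℝ) (a : ℝ) (ha : a ≠ 0) :
    2 * (u ⬝ᵥ ((1 / a) • u)) - a * (((1 / a) • u) ⬝ᵥ ((1 / a) • u)) = (1 / a) * (u ⬝ᵥ u) := by
  simp only [smul_dotProduct, dotProduct_smul, smul_eq_mul]
  field_simp
  ring

theorem stmt3 (N m : ℕ) (hN : 1 ≤ N) (hm : 1 ≤ m)
    (P : Matrix (Fin N) (Fin N) ℝ) (hP : P.PosDef)
    (X : Matrix (Fin N) (Fin N) ℝ) (hX : X.IsHermitian)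
    (K : Matrix (Fin m) (Fin N) ℝ)
    (τ cx cu : ℝ) (hτ : 0 < τ) (hcx : 0 < cx) (hcu : 0 < cu) :
    NegSemidef (blk3
      (X + τ • (P⁻¹ * P⁻¹)) 1 Kᵀ
      1 ((-(τ / (2 * cx ^ 2))) • (1 : Matrix (Fin N) (Fin N) ℝ)) 0
      K 0 ((-(τ / (2 * cu ^ 2))) • (1 : Matrix (Fin m) (Fin m) ℝ))) ↔
    NegSemidef (Matrix.fromBlocks
      (X + (2 * cx ^ 2 / τ) • (1 : Matrix (Fin N) (Fin N) ℝ) + (2 * cu ^ 2 / τ) • (Kᵀ * K))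
      P⁻¹ P⁻¹ ((-(1 / τ)) • (1 : Matrix (Fin N) (Fin N) ℝ))) := by
  have hcx2 : (0:ℝ) < 2 * cx ^ 2 := by positivity
  have hcu2 : (0:ℝ) < 2 * cu ^ 2 := by positivity
  have ha : (0:ℝ) < τ / (2 * cx ^ 2) := by positivity
  have hb : (0:ℝ) < τ / (2 * cu ^ 2) := by positivity
  have hPi : (P⁻¹).IsHermitian := hP.1.inv
  have hPiT : (P⁻¹)ᵀ = P⁻¹ := by
    have h := hPi; rwa [Matrix.IsHermitian, conjTranspose_eq_transpose_of_trivial] at h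
  have hXT : Xᵀ = X := by
    have h := hX; rwa [Matrix.IsHermitian, conjTranspose_eq_transpose_of_trivial] at h
  have hvPi : ∀ u : Fin N → ℝ, u ᵥ* P⁻¹ = P⁻¹ *ᵥ u := by
    intro u
    conv_lhs => rw [← hPiT]
    rw [vecMul_transpose]
  have hPP : ∀ u v : Fin N → ℝ, u ⬝ᵥ P⁻¹ *ᵥ v = (P⁻¹ *ᵥ u) ⬝ᵥ v := by
    intro u v; rw [dotProduct_mulVec, hvPi]
  have hPP2 : ∀ u : Fin N → ℝ, u ⬝ᵥ (P⁻¹ * P⁻¹) *ᵥ u = (P⁻¹ *ᵥ u) ⬝ᵥ (P⁻¹ *ᵥ u) := by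
    intro u; rw [← mulVec_mulVec, hPP]
  have hKK : ∀ u : Fin N → ℝ, u ⬝ᵥ (Kᵀ * K) *ᵥ u = (K *ᵥ u) ⬝ᵥ (K *ᵥ u) := by
    intro u; rw [← mulVec_mulVec, dotProduct_mulVec, vecMul_transpose]
  -- Hermitian-ness of both matrices (unconditional)
  have hH3 : (blk3
      (X + τ • (P⁻¹ * P⁻¹)) 1 Kᵀ
      1 ((-(τ / (2 * cx ^ 2))) • (1 : Matrix (Fin N) (Fin N) ℝ)) 0
      K 0 ((-(τ / (2 * cu ^ 2))) • (1 : Matrix (Fin m) (Fin m) ℝ))).IsHermitian := by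
    unfold blk3
    rw [Matrix.IsHermitian, conjTranspose_eq_transpose_of_trivial]
    simp only [fromBlocks_transpose, transpose_fromRows, transpose_fromCols,
      transpose_add, transpose_smul, transpose_mul, transpose_one, transpose_zero,
      transpose_transpose, hPiT, hXT]
  have hH2 : (Matrix.fromBlocks
      (X + (2 * cx ^ 2 / τ) • (1 : Matrix (Fin N) (Fin N) ℝ) + (2 * cu ^ 2 / τ) • (Kᵀ * K))
      P⁻¹ P⁻¹ ((-(1 / τ)) • (1 : Matrix (Fin N) (Fin N) ℝ))).IsHermitian := by
    rw [Matrix.IsHermitian, conjTranspose_eq_transpose_of_trivial]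
    simp only [fromBlocks_transpose, transpose_add, transpose_smul, transpose_mul,
      transpose_one, transpose_transpose, hPiT, hXT]
  -- quadratic form of the 3×3 block matrix
  have hq3 : ∀ (x y : Fin N → ℝ) (z : Fin m → ℝ),
      (Sum.elim (Sum.elim x y) z) ⬝ᵥ (blk3
        (X + τ • (P⁻¹ * P⁻¹)) 1 Kᵀ
        1 ((-(τ / (2 * cx ^ 2))) • (1 : Matrix (Fin N) (Fin N) ℝ)) 0
        K 0 ((-(τ / (2 * cu ^ 2))) • (1 : Matrix (Fin m) (Fin m) ℝ))).mulVec
        (Sum.elim (Sum.elim x y) z)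
      = (x ⬝ᵥ X.mulVec x + τ * ((P⁻¹.mulVec x) ⬝ᵥ (P⁻¹.mulVec x)))
        + (2 * (x ⬝ᵥ y) - (τ / (2 * cx ^ 2)) * (y ⬝ᵥ y))
        + (2 * ((K.mulVec x) ⬝ᵥ z) - (τ / (2 * cu ^ 2)) * (z ⬝ᵥ z)) := by
    intro x y z
    unfold blk3
    simp only [fromBlocks_mulVec, fromRows_mulVec, fromCols_mulVec_sumElim,
      sumElim_dotProduct_sumElim, dotProduct_add, add_mulVec, one_mulVec, zero_mulVec,
      smul_mulVec, dotProduct_smul, smul_eq_mul, add_zero, zero_add,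
      dotProduct_zero, Sum.elim_comp_inl, Sum.elim_comp_inr, neg_smul, neg_mulVec,
      dotProduct_neg, mulVec_mulVec]
    rw [hPP2, dotProduct_comm y x, dotProduct_comm z (K *ᵥ x), dotProduct_mulVec x Kᵀ,
      vecMul_transpose]
    ring
  -- quadratic form of the 2×2 block matrix
  have hq2 : ∀ (x w : Fin N → ℝ),
      (Sum.elim x w) ⬝ᵥ (Matrix.fromBlocks
        (X + (2 * cx ^ 2 / τ) • (1 : Matrix (Fin N) (Fin N) ℝ) + (2 * cu ^ 2 / τ) • (Kᵀ * K))
        P⁻¹ P⁻¹ ((-(1 / τ)) • (1 : Matrix (Fin N) (Fin N) ℝ))).mulVec (Sum.elim x w)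
      = (x ⬝ᵥ X.mulVec x + (2 * cx ^ 2 / τ) * (x ⬝ᵥ x)
          + (2 * cu ^ 2 / τ) * ((K.mulVec x) ⬝ᵥ (K.mulVec x)))
        + (2 * ((P⁻¹.mulVec x) ⬝ᵥ w) - (1 / τ) * (w ⬝ᵥ w)) := by
    intro x w
    simp only [fromBlocks_mulVec, sumElim_dotProduct_sumElim, dotProduct_add, add_mulVec,
      one_mulVec, smul_mulVec, dotProduct_smul, smul_eq_mul, neg_smul, neg_mulVec,
      dotProduct_neg, Sum.elim_comp_inl, Sum.elim_comp_inr]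
    rw [hKK, hPP x w, dotProduct_comm w (P⁻¹ *ᵥ x)]
    ring
  -- the common scalar condition
  have key : (∀ v : ((Fin N ⊕ Fin N) ⊕ Fin m) → ℝ,
        v ⬝ᵥ (blk3
          (X + τ • (P⁻¹ * P⁻¹)) 1 Kᵀ
          1 ((-(τ / (2 * cx ^ 2))) • (1 : Matrix (Fin N) (Fin N) ℝ)) 0
          K 0 ((-(τ / (2 * cu ^ 2))) • (1 : Matrix (Fin m) (Fin m) ℝ))).mulVec v ≤ 0)
      ↔ (∀ x : Fin N → ℝ,
        x ⬝ᵥ X.mulVec x + τ * ((P⁻¹.mulVec x) ⬝ᵥ (P⁻¹.mulVec x))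
          + (2 * cx ^ 2 / τ) * (x ⬝ᵥ x)
          + (2 * cu ^ 2 / τ) * ((K.mulVec x) ⬝ᵥ (K.mulVec x)) ≤ 0) := by
    constructor
    · intro h x
      have := h (Sum.elim (Sum.elim x ((1 / (τ / (2 * cx ^ 2))) • x))
        ((1 / (τ / (2 * cu ^ 2))) • (K.mulVec x)))
      rw [hq3] at this
      rw [cross_eq x _ (ne_of_gt ha), cross_eq (K.mulVec x) _ (ne_of_gt hb)] at this
      rw [one_div_div] at this
      rw [one_div_div] at this
      linarith
    · intro h v
      have hv : v = Sum.elim (Sum.elim (fun i => v (Sum.inl (Sum.inl i)))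
          (fun i => v (Sum.inl (Sum.inr i)))) (fun i => v (Sum.inr i)) := by
        funext i; rcases i with (i | i) | i <;> rfl
      rw [hv, hq3]
      set x := fun i => v (Sum.inl (Sum.inl i)) with hxdef
      set y := fun i => v (Sum.inl (Sum.inr i)) with hydef
      set z := fun i => v (Sum.inr i) with hzdef
      have h1 := cross_le x y (τ / (2 * cx ^ 2)) ha
      have h2 := cross_le (K.mulVec x) z (τ / (2 * cu ^ 2)) hb
      rw [one_div_div] at h1
      rw [one_div_div] at h2
      have h3 := h x
      linarith
  have key2 : (∀ v : (Fin N ⊕ Fin N) → ℝ,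
        v ⬝ᵥ (Matrix.fromBlocks
          (X + (2 * cx ^ 2 / τ) • (1 : Matrix (Fin N) (Fin N) ℝ)
            + (2 * cu ^ 2 / τ) • (Kᵀ * K))
          P⁻¹ P⁻¹ ((-(1 / τ)) • (1 : Matrix (Fin N) (Fin N) ℝ))).mulVec v ≤ 0)
      ↔ (∀ x : Fin N → ℝ,
        x ⬝ᵥ X.mulVec x + τ * ((P⁻¹.mulVec x) ⬝ᵥ (P⁻¹.mulVec x))
          + (2 * cx ^ 2 / τ) * (x ⬝ᵥ x)
          + (2 * cu ^ 2 / τ) * ((K.mulVec x) ⬝ᵥ (K.mulVec x)) ≤ 0) := by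
    have hτ' : (0:ℝ) < 1 / τ := by positivity
    constructor
    · intro h x
      have := h (Sum.elim x ((1 / (1 / τ)) • (P⁻¹.mulVec x)))
      rw [hq2, cross_eq (P⁻¹.mulVec x) _ (ne_of_gt hτ'), one_div_one_div] at this
      linarith
    · intro h v
      have hv : v = Sum.elim (fun i => v (Sum.inl i)) (fun i => v (Sum.inr i)) := by
        funext i; rcases i with i | i <;> rfl
      rw [hv, hq2]
      set x := fun i => v (Sum.inl i)
      set w := fun i => v (Sum.inr i)
      have h1 := cross_le (P⁻¹.mulVec x) w (1 / τ) hτ'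
      rw [one_div_one_div] at h1
      have h3 := h x
      linarith
  constructor
  · rintro ⟨-, h⟩
    exact ⟨hH2, key2.mpr (key.mp h)⟩
  · rintro ⟨-, h⟩
    exact ⟨hH3, key.mpr (key2.mp h)⟩
end

section
/- Let N, m ≥ 1, let A_K ∈ ℝ^{N×N}, K ∈ ℝ^{m×N}, let P ∈ ℝ^{N×N} be symmetric positive definite, and let ρ ≥ 0, τ > 0, c_x > 0, c_u > 0 be real numbers. Assume that the symmetric block matrix [[P⁻¹·A_K + A_Kᵀ·P⁻¹ + ρ·P⁻² + τ·P⁻², I_N, Kᵀ], [I_N, −(τ/(2c_x²))·I_N, 0], [K, 0, −(τ/(2c_u²))·I_m]] is negative semidefinite. Then for every z ∈ ℝ^N and every r ∈ ℝ^N satisfying ‖r‖² ≤ 2c_x²‖z‖² + 2c_u²‖K z‖², it holds that 2·zᵀP⁻¹(A_K z + r) ≤ −ρ·zᵀP⁻²z. -/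
open Matrix

/-- The Euclidean norm of a vector in `ℝ^k`. -/
noncomputable def enorm' {k : ℕ} (v : Fin k → ℝ) : ℝ :=
  ‖(EuclideanSpace.equiv (Fin k) ℝ).symm v‖

lemma enorm_sq {k : ℕ} (v : Fin k → ℝ) : enorm' v ^ 2 = v ⬝ᵥ v := by
  rw [enorm', EuclideanSpace.norm_eq, Real.sq_sqrt (by positivity)]
  simp [dotProduct, sq]

lemma elim_add_elim {α β : Type*} (u v : α → ℝ) (x y : β → ℝ) :
    Sum.elim u x + Sum.elim v y = Sum.elim (u + v) (x + y) := by
  funext i; cases i <;> simp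

lemma dp_self_nonneg {k : ℕ} (v : Fin k → ℝ) : 0 ≤ v ⬝ᵥ v :=
  Finset.sum_nonneg fun i _ => mul_self_nonneg _

theorem stmt4 (N m : ℕ) (hN : 1 ≤ N) (hm : 1 ≤ m)
    (AK : Matrix (Fin N) (Fin N) ℝ) (K : Matrix (Fin m) (Fin N) ℝ)
    (P : Matrix (Fin N) (Fin N) ℝ) (hP : P.PosDef)
    (ρ τ cx cu : ℝ) (hρ : 0 ≤ ρ) (hτ : 0 < τ) (hcx : 0 < cx) (hcu : 0 < cu)
    (hLMI : NegSemidef (blk3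
      (P⁻¹ * AK + AKᵀ * P⁻¹ + ρ • (P⁻¹ * P⁻¹) + τ • (P⁻¹ * P⁻¹)) 1 Kᵀ
      1 ((-(τ / (2 * cx ^ 2))) • (1 : Matrix (Fin N) (Fin N) ℝ)) 0
      K 0 ((-(τ / (2 * cu ^ 2))) • (1 : Matrix (Fin m) (Fin m) ℝ)))) :
    ∀ z r : Fin N → ℝ,
      enorm' r ^ 2 ≤ 2 * cx ^ 2 * enorm' z ^ 2 + 2 * cu ^ 2 * enorm' (K.mulVec z) ^ 2 →
      2 * (z ⬝ᵥ (P⁻¹).mulVec (AK.mulVec z + r)) ≤ -ρ * (z ⬝ᵥ (P⁻¹ * P⁻¹).mulVec z) := by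
  intro z r hr
  set ζ := (P⁻¹).mulVec z with hζ
  have hsym : (P⁻¹)ᵀ = P⁻¹ := by
    have := hP.isHermitian.inv
    simpa [Matrix.IsHermitian] using this
  -- quadratic form from LMI with the maximizing test vector
  have key := hLMI.2 (Sum.elim (Sum.elim z ((2 * cx ^ 2 / τ) • z))
      ((2 * cu ^ 2 / τ) • K.mulVec z))
  simp only [blk3, fromBlocks_mulVec, fromRows_mulVec, fromCols_mulVec_sumElim,
    Sum.elim_comp_inl, Sum.elim_comp_inr, elim_add_elim,
    sumElim_dotProduct_sumElim] at key
  simp only [Matrix.add_mulVec, Matrix.smul_mulVec, Matrix.one_mulVec,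
    Matrix.mulVec_smul, dotProduct_add, dotProduct_smul, smul_dotProduct,
    Matrix.zero_mulVec, add_zero, zero_add, Matrix.mulVec_zero,
    smul_eq_mul, Matrix.neg_mulVec, dotProduct_neg, neg_smul] at key
  -- rewrite matrix products as iterated mulVec
  have hmul : ∀ (A B : Matrix (Fin N) (Fin N) ℝ) (v : Fin N → ℝ),
      (A * B).mulVec v = A.mulVec (B.mulVec v) := fun A B v => by
    rw [← Matrix.mulVec_mulVec]
  have hvm : ∀ a : Fin N → ℝ, a ᵥ* P⁻¹ = P⁻¹ *ᵥ a := fun a => by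
    rw [← Matrix.vecMul_transpose, hsym]
  have hP2 : z ⬝ᵥ (P⁻¹ * P⁻¹) *ᵥ z = ζ ⬝ᵥ ζ := by
    rw [hmul, Matrix.dotProduct_mulVec, hvm]
  have hzr : z ⬝ᵥ P⁻¹ *ᵥ r = ζ ⬝ᵥ r := by
    rw [Matrix.dotProduct_mulVec, hvm]
  have hKz : z ⬝ᵥ Kᵀ *ᵥ (K *ᵥ z) = (K *ᵥ z) ⬝ᵥ (K *ᵥ z) := by
    rw [Matrix.dotProduct_mulVec, Matrix.vecMul_transpose]
  have hAKT : z ⬝ᵥ (AKᵀ * P⁻¹) *ᵥ z = z ⬝ᵥ P⁻¹ *ᵥ (AK *ᵥ z) := by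
    rw [hmul, Matrix.dotProduct_mulVec, Matrix.vecMul_transpose,
      Matrix.dotProduct_mulVec, hvm, dotProduct_comm]
  rw [hmul, hAKT, hP2, hKz] at key
  simp only [dotProduct_zero, mul_zero, add_zero] at key
  rw [enorm_sq, enorm_sq, enorm_sq] at hr
  have hcs : 0 ≤ (τ • ζ - r) ⬝ᵥ (τ • ζ - r) := dp_self_nonneg _
  simp only [sub_dotProduct, dotProduct_sub, smul_dotProduct, dotProduct_smul,
    smul_eq_mul] at hcs
  have hrζ : r ⬝ᵥ ζ = ζ ⬝ᵥ r := dotProduct_comm r ζ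
  rw [hrζ] at hcs
  rw [Matrix.mulVec_add, dotProduct_add, hzr, hP2]
  have hτ' : τ ≠ 0 := ne_of_gt hτ
  have e1 : 2 * cx ^ 2 / τ * (z ⬝ᵥ z) + 2 * cx ^ 2 / τ * -(τ / (2 * cx ^ 2) * (2 * cx ^ 2 / τ * (z ⬝ᵥ z)))
      = 0 := by field_simp; ring
  have e2 : 2 * cu ^ 2 / τ * ((K *ᵥ z) ⬝ᵥ (K *ᵥ z)) + 2 * cu ^ 2 / τ * -(τ / (2 * cu ^ 2) * (2 * cu ^ 2 / τ * ((K *ᵥ z) ⬝ᵥ (K *ᵥ z))))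
      = 0 := by field_simp; ring
  rw [e1, e2] at key
  simp only [add_zero] at key
  have hXs : τ * (2 * cx ^ 2 / τ * (z ⬝ᵥ z)) = 2 * cx ^ 2 * (z ⬝ᵥ z) := by
    field_simp
  have hYs : τ * (2 * cu ^ 2 / τ * ((K *ᵥ z) ⬝ᵥ (K *ᵥ z))) = 2 * cu ^ 2 * ((K *ᵥ z) ⬝ᵥ (K *ᵥ z)) := by
    field_simp
  have hkey := mul_le_mul_of_nonneg_left key hτ.le
  rw [← mul_le_mul_iff_right₀ hτ]
  nlinarith [hkey, hcs, hr, hXs, hYs]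
end
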